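/- Let p be a prime with p ≡ 1 or 9 (mod 16), write p = π·π̄ with π a prime element of ℤ[i], and set k = (3p+1)/4. Then for every nonzero ideal 𝔞 of ℤ[i] coprime to 4p, with primary generator α (i.e. α = a+bi with (a,b) ≡ (1,0) or (3,2) mod 4), one has ᾱ^{k−1}·χ(𝔞) ≡ α^{k−1} (mod p·ℤ[i]), where χ(𝔞) is the complex conjugate of (α/π)₄·(α/π̄)₄. -/

import Mathlib

open scoped GaussianInt

/-- `α ∈ ℤ[i]` is primary if `α = a + bi` with `(a, b) ≡ (1, 0)` or `(3, 2) mod 4`. -/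
def GaussianInt.IsPrimary (α : GaussianInt) : Prop :=
  (α.re % 4 = 1 ∧ α.im % 4 = 0) ∨ (α.re % 4 = 3 ∧ α.im % 4 = 2)

/-- A fourth root of unity in `ℤ[i]` satisfies `star q = q ^ 3`. -/
lemma aux_star_eq_cube (q : GaussianInt) (hq : q ^ 4 = 1) : star q = q ^ 3 := by
  have hn4 : q.norm ^ 4 = 1 := by
    have := congrArg Zsqrtd.norm hq
    simpa [pow_succ, Zsqrtd.norm_mul] using this
  have hnn : 0 ≤ q.norm := Zsqrtd.norm_nonneg (by norm_num) q
  have hdvd : q.norm ∣ 1 := ⟨q.norm ^ 3, by linear_combination -hn4⟩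
  have hn : q.norm = 1 := Int.eq_one_of_dvd_one hnn hdvd
  have h := Zsqrtd.norm_eq_mul_conj q
  rw [hn] at h
  have hms : q * star q = 1 := by exact_mod_cast h.symm
  calc star q = q ^ 4 * star q := by rw [hq, one_mul]
    _ = q ^ 3 * (q * star q) := by ring
    _ = q ^ 3 := by rw [hms, mul_one]

/-- Generic congruence step. -/
lemma aux_step (ρ α β u v w : GaussianInt) (m : ℕ)
    (h1 : ρ ∣ α ^ m - u) (h2 : ρ ∣ β ^ m - v) (hvw : v ^ 3 * w = u ^ 3) :
    ρ ∣ β ^ (3 * m) * w - α ^ (3 * m) := by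
  have d1 : ρ ∣ (α ^ m) ^ 3 - u ^ 3 := h1.trans (sub_dvd_pow_sub_pow _ _ 3)
  have d2 : ρ ∣ (β ^ m) ^ 3 - v ^ 3 := h2.trans (sub_dvd_pow_sub_pow _ _ 3)
  have key : β ^ (3 * m) * w - α ^ (3 * m)
      = ((β ^ m) ^ 3 - v ^ 3) * w - ((α ^ m) ^ 3 - u ^ 3) := by
    rw [pow_mul' β 3 m, pow_mul' α 3 m]
    linear_combination hvw
  rw [key]
  exact dvd_sub (d2.mul_right w) d1

theorem quartic_symbol_congruence (p : ℕ) (hp : p.Prime)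
    (hp16 : p % 16 = 1 ∨ p % 16 = 9)
    (π : GaussianInt) (hπ : Prime π) (hpπ : (p : GaussianInt) = π * star π)
    (k : ℕ) (hk : 4 * k = 3 * p + 1)
    (α : GaussianInt) (hα : α.IsPrimary)
    (hcop : IsCoprime α ((4 * p : ℕ) : GaussianInt))
    (q₁ q₂ : GaussianInt) (hq₁root : q₁ ^ 4 = 1) (hq₂root : q₂ ^ 4 = 1)
    (hq₁ : π ∣ α ^ ((p - 1) / 4) - q₁) (hq₂ : star π ∣ α ^ ((p - 1) / 4) - q₂)
    (χ : GaussianInt) (hχ : χ = star (q₁ * q₂)) :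
    (p : GaussianInt) ∣ (star α) ^ (k - 1) * χ - α ^ (k - 1) := by
  have hp41 : p % 4 = 1 := by rcases hp16 with h | h <;> omega
  have hp5 : 5 ≤ p := by have := hp.two_le; omega
  have hk1 : k - 1 = 3 * ((p - 1) / 4) := by omega
  set m := (p - 1) / 4 with hm
  -- star versions of the congruences
  have hq₁' : star π ∣ (star α) ^ m - star q₁ := by
    obtain ⟨c, hc⟩ := hq₁
    refine ⟨star c, ?_⟩
    have := congrArg star hc
    simpa [star_mul'] using this
  have hq₂' : π ∣ (star α) ^ m - star q₂ := by
    obtain ⟨c, hc⟩ := hq₂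
    refine ⟨star c, ?_⟩
    have := congrArg star hc
    simpa [star_mul'] using this
  have hχ' : χ = star q₁ * star q₂ := by rw [hχ, star_mul']
  have hs1 : star q₁ = q₁ ^ 3 := aux_star_eq_cube q₁ hq₁root
  have hs2 : star q₂ = q₂ ^ 3 := aux_star_eq_cube q₂ hq₂root
  -- π divides
  have D1 : π ∣ (star α) ^ (3 * m) * χ - α ^ (3 * m) := by
    refine aux_step π α (star α) q₁ (star q₂) χ m hq₁ hq₂' ?_
    rw [hχ', hs1, hs2]
    calc (q₂ ^ 3) ^ 3 * (q₁ ^ 3 * q₂ ^ 3) = (q₂ ^ 4) ^ 3 * q₁ ^ 3 := by ring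
      _ = q₁ ^ 3 := by rw [hq₂root, one_pow, one_mul]
  have D2 : star π ∣ (star α) ^ (3 * m) * χ - α ^ (3 * m) := by
    refine aux_step (star π) α (star α) q₂ (star q₁) χ m hq₂ hq₁' ?_
    rw [hχ', hs1, hs2]
    calc (q₁ ^ 3) ^ 3 * (q₁ ^ 3 * q₂ ^ 3) = (q₁ ^ 4) ^ 3 * q₂ ^ 3 := by ring
      _ = q₂ ^ 3 := by rw [hq₁root, one_pow, one_mul]
  -- norm of π is p
  have hnormπ : π.norm = (p : ℤ) := by
    have h := congrArg Zsqrtd.norm hpπ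
    rw [Zsqrtd.norm_mul, Zsqrtd.norm_conj, Zsqrtd.norm_natCast] at h
    have hnn : 0 ≤ π.norm := Zsqrtd.norm_nonneg (by norm_num) π
    nlinarith [h, hnn]
  -- star π does not divide π
  have hnd : ¬ star π ∣ π := by
    intro hdvd
    have hππ : π ∣ star π := by
      obtain ⟨c, hc⟩ := hdvd
      refine ⟨star c, ?_⟩
      have := congrArg star hc
      simpa [star_mul'] using this
    have hpZ : Prime (p : ℤ) := Nat.prime_iff_prime_int.mp hp
    have hp2 : ¬ (p : ℤ) ∣ 2 := by
      intro h
      have := Int.le_of_dvd (by norm_num) h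
      omega
    have hre : π ∣ ((2 * π.re : ℤ) : GaussianInt) := by
      have he : π + star π = ((2 * π.re : ℤ) : GaussianInt) := by
        ext <;> simp [Zsqrtd.re_star, Zsqrtd.im_star] <;> ring
      rw [← he]
      exact dvd_add dvd_rfl hππ
    have him : π ∣ ((2 * π.im : ℤ) : GaussianInt) * ⟨0, 1⟩ := by
      have he : π - star π = ((2 * π.im : ℤ) : GaussianInt) * ⟨0, 1⟩ := by
        ext <;> simp [Zsqrtd.re_star, Zsqrtd.im_star] <;> ring
      rw [← he]
      exact dvd_sub dvd_rfl hππ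
    have hdre : (p : ℤ) ∣ π.re := by
      obtain ⟨c, hc⟩ := hre
      have h := congrArg Zsqrtd.norm hc
      simp only [Zsqrtd.norm_mul, Zsqrtd.norm_intCast, hnormπ] at h
      have hd : (p : ℤ) ∣ (2 * π.re) * (2 * π.re) := ⟨c.norm, h⟩
      have h2r : (p : ℤ) ∣ 2 * π.re := (hpZ.dvd_mul.mp hd).elim id id
      exact (hpZ.dvd_mul.mp h2r).resolve_left hp2
    have hdim : (p : ℤ) ∣ π.im := by
      obtain ⟨c, hc⟩ := him
      have hI : Zsqrtd.norm (⟨0, 1⟩ : GaussianInt) = 1 := by simp [Zsqrtd.norm]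
      have h := congrArg Zsqrtd.norm hc
      simp only [Zsqrtd.norm_mul, Zsqrtd.norm_intCast, hnormπ, hI, mul_one] at h
      have hd : (p : ℤ) ∣ (2 * π.im) * (2 * π.im) := ⟨c.norm, h⟩
      have h2r : (p : ℤ) ∣ 2 * π.im := (hpZ.dvd_mul.mp hd).elim id id
      exact (hpZ.dvd_mul.mp h2r).resolve_left hp2
    have hdd : (p : ℤ) * (p : ℤ) ∣ (p : ℤ) := by
      obtain ⟨a, ha⟩ := hdre
      obtain ⟨b, hb⟩ := hdim
      have : (p : ℤ) * (p : ℤ) ∣ Zsqrtd.norm π := by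
        refine ⟨a * a + b * b, ?_⟩
        simp only [Zsqrtd.norm, ha, hb]
        ring
      rwa [hnormπ] at this
    have := Int.le_of_dvd (by positivity) hdd
    nlinarith
  -- combine
  have hπ' : Prime (star π) := by
    simpa using (MulEquiv.prime_iff (starMulAut (R := GaussianInt)) (p := π)).mpr hπ
  obtain ⟨c, hc⟩ := D1
  have h2 : star π ∣ π * c := by rw [← hc]; exact D2
  have hc2 : star π ∣ c := (hπ'.dvd_mul.mp h2).resolve_left hnd
  rw [hk1, hpπ, hc]
  exact mul_dvd_mul_left π hc2
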